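/- Let p be a probability distribution on ℕ with p_k = c·k^{−3/2} (c the normalizing constant), and let Aₙ be the event that among n independent samples from p the largest value is attained at least twice. Then P(Aₙ) = o(1/n) as n → ∞. -/

import Mathlib

open MeasureTheory ProbabilityTheory Filter
open scoped ENNReal


-- telescoping
lemma tele18 (f : ℕ → ℝ) (K : ℕ) : ∀ N, K ≤ N →
    ∑ k ∈ Finset.Ioc K N, (f (k-1) - f k) = f K - f N := by
  intro N
  induction N with
  | zero => intro h; interval_cases K <;> simp
  | succ N ih =>
    intro h
    rcases Nat.lt_or_ge K (N+1) with h' | h'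
    · have hKN : K ≤ N := Nat.lt_succ_iff.mp h'
      rw [Finset.sum_Ioc_succ_top hKN, ih hKN]
      have : N + 1 - 1 = N := rfl
      rw [this]; ring
    · have : K = N + 1 := le_antisymm h h'
      subst this; simp

-- asymptotics
lemma asym18 (a c : ℝ) (ha : 0 < a) :
    Tendsto (fun n : ℕ => (n : ℝ) * Real.exp (-(a * (n:ℝ) ^ ((1:ℝ)/8))) + c^2 * (n:ℝ) ^ (-(1:ℝ)/2))
      atTop (nhds 0) := by
  have h2 : Tendsto (fun n : ℕ => c^2 * (n:ℝ) ^ (-(1:ℝ)/2)) atTop (nhds 0) := by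
    have := (tendsto_rpow_neg_atTop (y := (1:ℝ)/2) (by norm_num)).comp
      tendsto_natCast_atTop_atTop (α := ℕ)
    have := this.const_mul (c^2)
    simpa [neg_div, Function.comp] using this
  have htn : Tendsto (fun n : ℕ => a * (n:ℝ) ^ ((1:ℝ)/8)) atTop atTop := by
    exact Tendsto.const_mul_atTop ha ((tendsto_rpow_atTop (by norm_num)).comp
      tendsto_natCast_atTop_atTop)
  have h1 : Tendsto (fun n : ℕ => (1/a)^8 * ((a * (n:ℝ) ^ ((1:ℝ)/8))^8 *
      Real.exp (-(a * (n:ℝ) ^ ((1:ℝ)/8))))) atTop (nhds 0) := by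
    have := ((Real.tendsto_pow_mul_exp_neg_atTop_nhds_zero 8).comp htn).const_mul ((1/a)^8)
    simpa [Function.comp] using this
  have heq : ∀ n : ℕ, (1/a)^8 * ((a * (n:ℝ) ^ ((1:ℝ)/8))^8 *
      Real.exp (-(a * (n:ℝ) ^ ((1:ℝ)/8)))) = (n:ℝ) * Real.exp (-(a * (n:ℝ) ^ ((1:ℝ)/8))) := by
    intro n
    have hn : ((n:ℝ) ^ ((1:ℝ)/8))^(8:ℕ) = (n:ℝ) := by
      rw [← Real.rpow_natCast ((n:ℝ) ^ ((1:ℝ)/8)) 8, ← Real.rpow_mul (Nat.cast_nonneg n)]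
      norm_num
    rw [mul_pow, ← mul_assoc, ← mul_assoc]
    rw [hn]
    field_simp
  have := h1.congr heq
  simpa using this.add h2

lemma single18 {Ω : Type*} [MeasurableSpace Ω] (P : Measure Ω) [IsProbabilityMeasure P]
    (X : Ω → ℕ) (hm : Measurable X) (c : ℝ) (hc : 0 < c)
    (hlaw : ∀ k : ℕ, 1 ≤ k → P {ω | X ω = k} = ENNReal.ofReal (c * (k : ℝ) ^ (-(3 : ℝ) / 2)))
    (K : ℕ) (hK : 1 ≤ K) :
    P (X ⁻¹' Set.Iic K) ≤
      ENNReal.ofReal (Real.exp (-(c * 2 ^ (-(3:ℝ)/2) * (K:ℝ) ^ (-(1:ℝ)/2)))) := by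
  set x : ℝ := c * 2 ^ (-(3:ℝ)/2) * (K:ℝ) ^ (-(1:ℝ)/2) with hxdef
  have hKpos : (0:ℝ) < K := by exact_mod_cast hK
  have hx0 : 0 ≤ x := by
    apply mul_nonneg (mul_nonneg hc.le (Real.rpow_nonneg (by norm_num) _))
      (Real.rpow_nonneg hKpos.le _)
  have hms : MeasurableSet (X ⁻¹' Set.Iic K) := hm measurableSet_Iic
  -- tail lower bound
  have hsub : (⋃ k ∈ Finset.Ioc K (2*K), {ω | X ω = k}) ⊆ (X ⁻¹' Set.Iic K)ᶜ := by
    intro ω hw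
    simp only [Set.mem_iUnion, Finset.mem_Ioc] at hw
    obtain ⟨k, ⟨hk1, _⟩, hk3⟩ := hw
    simp only [Set.mem_compl_iff, Set.mem_preimage, Set.mem_Iic, not_le]
    have : X ω = k := hk3
    omega
  have hUnion : P (⋃ k ∈ Finset.Ioc K (2*K), {ω | X ω = k})
      = ∑ k ∈ Finset.Ioc K (2*K), P {ω | X ω = k} := by
    apply measure_biUnion_finset
    · intro a _ b _ hab
      simp only [Function.onFun, Set.disjoint_left]
      intro ω ha hb
      exact hab (by rw [← ha, ← hb])
    · intro k _
      exact hm (measurableSet_singleton k)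
  have hterm : ∀ k ∈ Finset.Ioc K (2*K),
      ENNReal.ofReal (c * ((2*K:ℕ):ℝ) ^ (-(3:ℝ)/2)) ≤ P {ω | X ω = k} := by
    intro k hk
    rw [Finset.mem_Ioc] at hk
    rw [hlaw k (by omega)]
    apply ENNReal.ofReal_le_ofReal
    apply mul_le_mul_of_nonneg_left _ hc.le
    have hk0 : (0:ℝ) < (k:ℝ) := by exact_mod_cast (show 0 < k by omega)
    apply Real.rpow_le_rpow_of_nonpos hk0 (by exact_mod_cast hk.2) (by norm_num)
  have hsum : ENNReal.ofReal x ≤ ∑ k ∈ Finset.Ioc K (2*K), P {ω | X ω = k} := by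
    calc ENNReal.ofReal x
        = (K : ℝ≥0∞) * ENNReal.ofReal (c * ((2*K:ℕ):ℝ) ^ (-(3:ℝ)/2)) := by
          rw [← ENNReal.ofReal_natCast K, ← ENNReal.ofReal_mul (by positivity)]
          congr 1
          have h2K : ((2*K:ℕ):ℝ) = 2 * (K:ℝ) := by push_cast; ring
          rw [h2K, Real.mul_rpow (by norm_num) hKpos.le, hxdef]
          rw [show (-(1:ℝ)/2) = 1 + (-(3)/2) by norm_num, Real.rpow_add hKpos, Real.rpow_one]
          ring
      _ ≤ (Finset.Ioc K (2*K)).card • ENNReal.ofReal (c * ((2*K:ℕ):ℝ) ^ (-(3:ℝ)/2)) := by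
          rw [Nat.card_Ioc]
          have : 2*K - K = K := by omega
          rw [this, nsmul_eq_mul]
      _ ≤ _ := Finset.card_nsmul_le_sum _ _ _ hterm
  have htail : ENNReal.ofReal x ≤ P ((X ⁻¹' Set.Iic K)ᶜ) := by
    rw [← hUnion] at hsum
    exact hsum.trans (measure_mono hsub)
  have hsplit : P (X ⁻¹' Set.Iic K) = 1 - P ((X ⁻¹' Set.Iic K)ᶜ) :=
    ENNReal.eq_sub_of_add_eq (measure_ne_top P _) (by rw [measure_add_measure_compl hms, measure_univ])
  calc P (X ⁻¹' Set.Iic K) = 1 - P ((X ⁻¹' Set.Iic K)ᶜ) := hsplit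
    _ ≤ 1 - ENNReal.ofReal x := tsub_le_tsub_left htail 1
    _ = ENNReal.ofReal (1 - x) := by
        rw [ENNReal.ofReal_sub _ hx0, ENNReal.ofReal_one]
    _ ≤ ENNReal.ofReal (Real.exp (-x)) := by
        apply ENNReal.ofReal_le_ofReal
        have := Real.add_one_le_exp (-x)
        linarith

lemma pair18 {Ω : Type*} [MeasurableSpace Ω] (P : Measure Ω) [IsProbabilityMeasure P]
    (X Y : Ω → ℕ) (hmX : Measurable X) (hmY : Measurable Y)
    (hind : IndepFun X Y P) (c : ℝ) (hc : 0 < c)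
    (hlawX : ∀ k : ℕ, 1 ≤ k → P {ω | X ω = k} = ENNReal.ofReal (c * (k : ℝ) ^ (-(3 : ℝ) / 2)))
    (hlawY : ∀ k : ℕ, 1 ≤ k → P {ω | Y ω = k} = ENNReal.ofReal (c * (k : ℝ) ^ (-(3 : ℝ) / 2)))
    (K : ℕ) (hK : 1 ≤ K) :
    P {ω | X ω = Y ω ∧ K < X ω} ≤ ENNReal.ofReal (c^2 / (K:ℝ)^2) := by
  have hKpos : (0:ℝ) < K := by exact_mod_cast hK
  set S : ℕ → Set Ω := fun k => if K < k then X ⁻¹' {k} ∩ Y ⁻¹' {k} else ∅ with hS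
  set h : ℕ → ℝ := fun k => if K < k then (c^2/(K:ℝ)) * (((k-1:ℕ):ℝ)⁻¹ - (k:ℝ)⁻¹) else 0 with hh
  have hh0 : ∀ k, 0 ≤ h k := by
    intro k
    simp only [hh]
    split_ifs with hk
    · apply mul_nonneg (by positivity)
      have h1 : ((k-1:ℕ):ℝ) ≤ (k:ℝ) := by exact_mod_cast Nat.sub_le k 1
      have h2 : (0:ℝ) < ((k-1:ℕ):ℝ) := by
        have : 1 ≤ k - 1 := by omega
        exact_mod_cast Nat.lt_of_lt_of_le Nat.zero_lt_one this
      have := inv_anti₀ h2 h1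
      linarith
    · exact le_rfl
  have hsub : {ω | X ω = Y ω ∧ K < X ω} ⊆ ⋃ k, S k := by
    intro ω ⟨h1, h2⟩
    apply Set.mem_iUnion.2 ⟨X ω, ?_⟩
    simp only [hS, if_pos h2]
    exact ⟨rfl, by simp [← h1]⟩
  have hterm : ∀ k, P (S k) ≤ ENNReal.ofReal (h k) := by
    intro k
    simp only [hS, hh]
    split_ifs with hk
    · have hk1 : 1 ≤ k := by omega
      have hk2 : 2 ≤ k := by omega
      have hmul := hind.measure_inter_preimage_eq_mul {k} {k}
        (measurableSet_singleton k) (measurableSet_singleton k)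
      have hXk : X ⁻¹' ({k} : Set ℕ) = {ω | X ω = k} := rfl
      have hYk : Y ⁻¹' ({k} : Set ℕ) = {ω | Y ω = k} := rfl
      rw [hmul, hXk, hYk, hlawX k hk1, hlawY k hk1,
        ← ENNReal.ofReal_mul (by positivity)]
      apply ENNReal.ofReal_le_ofReal
      have hkr : (0:ℝ) < (k:ℝ) := by exact_mod_cast Nat.lt_of_lt_of_le Nat.zero_lt_one hk1
      have hrw : c * (k:ℝ) ^ (-(3:ℝ)/2) * (c * (k:ℝ) ^ (-(3:ℝ)/2)) = c^2 / (k:ℝ)^3 := by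
        rw [show c * (k:ℝ) ^ (-(3:ℝ)/2) * (c * (k:ℝ) ^ (-(3:ℝ)/2))
            = c^2 * ((k:ℝ) ^ (-(3:ℝ)/2) * (k:ℝ) ^ (-(3:ℝ)/2)) by ring,
          ← Real.rpow_add hkr]
        norm_num
        rw [div_eq_mul_inv]
      rw [hrw]
      have hcast : ((k-1:ℕ):ℝ) = (k:ℝ) - 1 := by
        rw [Nat.cast_sub hk1]; norm_num
      have hkm1 : (0:ℝ) < (k:ℝ) - 1 := by
        have : (2:ℝ) ≤ (k:ℝ) := by exact_mod_cast hk2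
        linarith
      have he : ((k-1:ℕ):ℝ)⁻¹ - (k:ℝ)⁻¹ = (((k:ℝ)-1) * (k:ℝ))⁻¹ := by
        rw [hcast]
        field_simp
        ring
      rw [he]
      have hK' : (K:ℝ) ≤ (k:ℝ) - 1 := by
        have : K + 1 ≤ k := hk
        have : ((K+1:ℕ):ℝ) ≤ (k:ℝ) := by exact_mod_cast this
        push_cast at this
        linarith
      calc c^2 / (k:ℝ)^3 ≤ c^2 / ((K:ℝ) * (((k:ℝ)-1) * (k:ℝ))) := by
            apply div_le_div_of_nonneg_left (by positivity) (by positivity)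
            calc (K:ℝ) * (((k:ℝ)-1) * (k:ℝ)) ≤ (k:ℝ) * ((k:ℝ) * (k:ℝ)) := by
                  apply mul_le_mul (by linarith) (by nlinarith) (by positivity) hkr.le
              _ = (k:ℝ)^3 := by ring
        _ = c^2/(K:ℝ) * (((k:ℝ)-1) * (k:ℝ))⁻¹ := by
            field_simp
    · simp
  have hbound : ∑' k, ENNReal.ofReal (h k) ≤ ENNReal.ofReal (c^2 / (K:ℝ)^2) := by
    rw [ENNReal.tsum_eq_iSup_sum]
    apply iSup_le
    intro s
    rw [← ENNReal.ofReal_sum_of_nonneg (fun k _ => hh0 k)]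
    apply ENNReal.ofReal_le_ofReal
    set N := max (s.sup id) (K) with hN
    have hKN : K ≤ N := le_max_right _ _
    have hfilter : ∑ k ∈ s, h k = ∑ k ∈ s.filter (fun k => K < k), h k := by
      symm
      apply Finset.sum_filter_of_ne
      intro k _ hne
      by_contra hc'
      exact hne (by simp [hh, if_neg hc'])
    have hsubset : s.filter (fun k => K < k) ⊆ Finset.Ioc K N := by
      intro k hk
      rw [Finset.mem_filter] at hk
      rw [Finset.mem_Ioc]
      exact ⟨hk.2, le_trans (Finset.le_sup (f := id) hk.1) (le_max_left _ _)⟩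
    have hmono : ∑ k ∈ s.filter (fun k => K < k), h k ≤ ∑ k ∈ Finset.Ioc K N, h k :=
      Finset.sum_le_sum_of_subset_of_nonneg hsubset (fun k _ _ => hh0 k)
    have hIoc : ∑ k ∈ Finset.Ioc K N, h k
        = (c^2/(K:ℝ)) * ((K:ℝ)⁻¹ - (N:ℝ)⁻¹) := by
      rw [← tele18 (fun m => ((m:ℕ):ℝ)⁻¹) K N hKN, Finset.mul_sum]
      apply Finset.sum_congr rfl
      intro k hk
      rw [Finset.mem_Ioc] at hk
      simp only [hh, if_pos hk.1]
    have hNinv : (0:ℝ) ≤ (N:ℝ)⁻¹ := by positivity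
    calc ∑ k ∈ s, h k ≤ (c^2/(K:ℝ)) * ((K:ℝ)⁻¹ - (N:ℝ)⁻¹) := by
          rw [hfilter]; rw [← hIoc] at *; exact hmono
      _ ≤ (c^2/(K:ℝ)) * (K:ℝ)⁻¹ := by
          apply mul_le_mul_of_nonneg_left _ (by positivity)
          linarith
      _ = c^2 / (K:ℝ)^2 := by
          field_simp
  calc P {ω | X ω = Y ω ∧ K < X ω} ≤ P (⋃ k, S k) := measure_mono hsub
    _ ≤ ∑' k, P (S k) := measure_iUnion_le S
    _ ≤ ∑' k, ENNReal.ofReal (h k) := ENNReal.tsum_le_tsum hterm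
    _ ≤ ENNReal.ofReal (c^2 / (K:ℝ)^2) := hbound

lemma cpos18 {Ω : Type*} [MeasurableSpace Ω] (P : Measure Ω) [IsProbabilityMeasure P]
    (X : Ω → ℕ) (c : ℝ)
    (hlaw : ∀ k : ℕ, 1 ≤ k → P {ω | X ω = k} = ENNReal.ofReal (c * (k : ℝ) ^ (-(3 : ℝ) / 2)))
    (hzero : P {ω | X ω = 0} = 0) : 0 < c := by
  by_contra hc
  push_neg at hc
  have huniv : (Set.univ : Set Ω) ⊆ ⋃ k, {ω | X ω = k} := by
    intro ω _
    exact Set.mem_iUnion.2 ⟨X ω, rfl⟩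
  have h1 : (1 : ℝ≥0∞) ≤ ∑' k, P {ω | X ω = k} := by
    calc (1:ℝ≥0∞) = P Set.univ := (measure_univ).symm
      _ ≤ P (⋃ k, {ω | X ω = k}) := measure_mono huniv
      _ ≤ ∑' k, P {ω | X ω = k} := measure_iUnion_le _
  have hz : ∀ k : ℕ, P {ω | X ω = k} = 0 := by
    intro k
    rcases Nat.eq_zero_or_pos k with hk | hk
    · rw [hk]; exact hzero
    · rw [hlaw k hk, ENNReal.ofReal_eq_zero]
      have : (0:ℝ) ≤ (k:ℝ) ^ (-(3:ℝ)/2) := Real.rpow_nonneg (Nat.cast_nonneg k) _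
      exact mul_nonpos_of_nonpos_of_nonneg hc this
  rw [tsum_congr hz] at h1
  simp at h1

theorem stmt_18 {Ω : Type*} [MeasurableSpace Ω] (P : Measure Ω) [IsProbabilityMeasure P]
    (Z : ℕ → Ω → ℕ) (hZm : ∀ i, Measurable (Z i))
    (hindep : iIndepFun Z P)
    (hid : ∀ i j, IdentDistrib (Z i) (Z j) P P)
    (c : ℝ)
    (hlaw : ∀ i, ∀ k : ℕ, 1 ≤ k →
      P {ω | Z i ω = k} = ENNReal.ofReal (c * (k : ℝ) ^ (-(3 : ℝ) / 2)))
    (hzero : ∀ i, P {ω | Z i ω = 0} = 0)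
    (A : ℕ → Set Ω)
    (hA : ∀ n, A n = {ω | ∃ i < n, ∃ j < n, i ≠ j ∧ Z i ω = Z j ω ∧
      ∀ m < n, Z m ω ≤ Z i ω}) :
    Tendsto (fun n : ℕ => (n : ℝ) * (P (A n)).toReal) atTop (nhds 0) := by
  have hc : 0 < c := cpos18 P (Z 0) c (hlaw 0) (hzero 0)
  set a : ℝ := c * 2 ^ (-(3:ℝ)/2) * 2 ^ (-(1:ℝ)/2) with hadef
  have ha0 : 0 < a := by positivity
  apply squeeze_zero'
  · exact Eventually.of_forall fun n => by positivity
  · filter_upwards [eventually_ge_atTop 1] with n hn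
    -- setup K
    have hn1 : (1:ℝ) ≤ (n:ℝ) := by exact_mod_cast hn
    have hnpos : (0:ℝ) < (n:ℝ) := by linarith
    have hnp74 : (1:ℝ) ≤ (n:ℝ) ^ ((7:ℝ)/4) := Real.one_le_rpow hn1 (by norm_num)
    set K : ℕ := ⌈(n:ℝ) ^ ((7:ℝ)/4)⌉₊ with hKdef
    have hK1 : 1 ≤ K := Nat.one_le_ceil_iff.mpr (by linarith)
    have hKpos : (0:ℝ) < (K:ℝ) := by exact_mod_cast hK1
    have hKlb : (n:ℝ) ^ ((7:ℝ)/4) ≤ (K:ℝ) := Nat.le_ceil _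
    have hKub : (K:ℝ) ≤ 2 * (n:ℝ) ^ ((7:ℝ)/4) := by
      have := Nat.ceil_lt_add_one (le_trans zero_le_one hnp74)
      calc (K:ℝ) ≤ (n:ℝ) ^ ((7:ℝ)/4) + 1 := le_of_lt this
        _ ≤ 2 * (n:ℝ) ^ ((7:ℝ)/4) := by linarith
    set x : ℝ := c * 2 ^ (-(3:ℝ)/2) * (K:ℝ) ^ (-(1:ℝ)/2) with hxdef
    have hx0 : 0 ≤ x := by positivity
    -- event decomposition
    set B : Set Ω := ⋂ i ∈ Finset.range n, Z i ⁻¹' (Set.Iic K) with hB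
    set D : ℕ → ℕ → Set Ω :=
      fun i j => if i = j then ∅ else {ω | Z i ω = Z j ω ∧ K < Z i ω} with hD
    have hAsub : A n ⊆ B ∪ ⋃ i ∈ Finset.range n, ⋃ j ∈ Finset.range n, D i j := by
      rw [hA]
      rintro ω ⟨i, hi, j, hj, hij, heq, hmax⟩
      by_cases hle : Z i ω ≤ K
      · left
        apply Set.mem_iInter₂.mpr
        intro m hm
        exact le_trans (hmax m (Finset.mem_range.mp hm)) hle
      · right
        apply Set.mem_biUnion (Finset.mem_range.mpr hi)
        apply Set.mem_biUnion (Finset.mem_range.mpr hj)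
        rw [hD]
        simp only [if_neg hij]
        exact ⟨heq, lt_of_not_ge hle⟩
    -- bound on B
    have hPB : P B ≤ ENNReal.ofReal (Real.exp (-((n:ℝ) * x))) := by
      have hprod : P B = ∏ i ∈ Finset.range n, P (Z i ⁻¹' Set.Iic K) := by
        rw [hB]
        exact hindep.measure_inter_preimage_eq_mul (Finset.range n)
          (sets := fun _ => Set.Iic K) (fun i _ => measurableSet_Iic)
      rw [hprod]
      calc ∏ i ∈ Finset.range n, P (Z i ⁻¹' Set.Iic K)
          ≤ (ENNReal.ofReal (Real.exp (-x))) ^ (Finset.range n).card :=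
            Finset.prod_le_pow_card _ _ _
              (fun i _ => single18 P (Z i) (hZm i) c hc (hlaw i) K hK1)
        _ = ENNReal.ofReal (Real.exp (-((n:ℝ) * x))) := by
            rw [Finset.card_range, ← ENNReal.ofReal_pow (Real.exp_nonneg _),
              ← Real.exp_nat_mul]
            congr 1
            ring
    -- bound on pairs
    have hPD : ∀ i j, P (D i j) ≤ ENNReal.ofReal (c^2 / (K:ℝ)^2) := by
      intro i j
      by_cases hij : i = j
      · rw [hD]; simp [hij]
      · rw [hD]; simp only [if_neg hij]
        exact pair18 P (Z i) (Z j) (hZm i) (hZm j) (hindep.indepFun hij) c hc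
          (hlaw i) (hlaw j) K hK1
    -- combine
    have hPA : P (A n) ≤ ENNReal.ofReal (Real.exp (-((n:ℝ) * x)))
        + (n:ℝ≥0∞) * ((n:ℝ≥0∞) * ENNReal.ofReal (c^2 / (K:ℝ)^2)) := by
      calc P (A n) ≤ P (B ∪ ⋃ i ∈ Finset.range n, ⋃ j ∈ Finset.range n, D i j) :=
            measure_mono hAsub
        _ ≤ P B + P (⋃ i ∈ Finset.range n, ⋃ j ∈ Finset.range n, D i j) :=
            measure_union_le _ _
        _ ≤ _ := by
            apply add_le_add hPB
            calc P (⋃ i ∈ Finset.range n, ⋃ j ∈ Finset.range n, D i j)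
                ≤ ∑ i ∈ Finset.range n, P (⋃ j ∈ Finset.range n, D i j) :=
                  measure_biUnion_finset_le _ _
              _ ≤ ∑ i ∈ Finset.range n, ((n:ℝ≥0∞) * ENNReal.ofReal (c^2 / (K:ℝ)^2)) := by
                  apply Finset.sum_le_sum
                  intro i _
                  calc P (⋃ j ∈ Finset.range n, D i j)
                      ≤ ∑ j ∈ Finset.range n, P (D i j) := measure_biUnion_finset_le _ _
                    _ ≤ (n:ℝ≥0∞) * ENNReal.ofReal (c^2 / (K:ℝ)^2) := by
                        calc ∑ j ∈ Finset.range n, P (D i j)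
                            ≤ ∑ j ∈ Finset.range n, ENNReal.ofReal (c^2 / (K:ℝ)^2) :=
                              Finset.sum_le_sum (fun j _ => hPD i j)
                          _ = (n:ℝ≥0∞) * ENNReal.ofReal (c^2 / (K:ℝ)^2) := by
                              rw [Finset.sum_const, Finset.card_range, nsmul_eq_mul]
              _ = (n:ℝ≥0∞) * ((n:ℝ≥0∞) * ENNReal.ofReal (c^2 / (K:ℝ)^2)) := by
                  rw [Finset.sum_const, Finset.card_range, nsmul_eq_mul]
    -- to real
    have hfin : ENNReal.ofReal (Real.exp (-((n:ℝ) * x)))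
        + (n:ℝ≥0∞) * ((n:ℝ≥0∞) * ENNReal.ofReal (c^2 / (K:ℝ)^2)) ≠ ⊤ := by
      apply ENNReal.add_ne_top.mpr
      constructor
      · exact ENNReal.ofReal_ne_top
      · exact ENNReal.mul_ne_top (ENNReal.natCast_ne_top n)
          (ENNReal.mul_ne_top (ENNReal.natCast_ne_top n) ENNReal.ofReal_ne_top)
    have htr : (P (A n)).toReal ≤ Real.exp (-((n:ℝ) * x)) + (n:ℝ) * ((n:ℝ) * (c^2 / (K:ℝ)^2)) := by
      have := ENNReal.toReal_mono hfin hPA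
      rwa [ENNReal.toReal_add ENNReal.ofReal_ne_top
          (ENNReal.mul_ne_top (ENNReal.natCast_ne_top n)
            (ENNReal.mul_ne_top (ENNReal.natCast_ne_top n) ENNReal.ofReal_ne_top)),
        ENNReal.toReal_ofReal (Real.exp_nonneg _), ENNReal.toReal_mul, ENNReal.toReal_mul,
        ENNReal.toReal_natCast, ENNReal.toReal_ofReal (by positivity)] at this
    -- real estimates
    have hexp : Real.exp (-((n:ℝ) * x)) ≤ Real.exp (-(a * (n:ℝ) ^ ((1:ℝ)/8))) := by
      rw [Real.exp_le_exp]
      apply neg_le_neg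
      rw [hxdef, hadef]
      have h1 : (2 * (n:ℝ) ^ ((7:ℝ)/4)) ^ (-(1:ℝ)/2) ≤ (K:ℝ) ^ (-(1:ℝ)/2) :=
        Real.rpow_le_rpow_of_nonpos hKpos hKub (by norm_num)
      have h2 : (2 * (n:ℝ) ^ ((7:ℝ)/4)) ^ (-(1:ℝ)/2)
          = 2 ^ (-(1:ℝ)/2) * (n:ℝ) ^ (-(7:ℝ)/8) := by
        rw [Real.mul_rpow (by norm_num) (by positivity),
          ← Real.rpow_mul (le_of_lt hnpos)]
        norm_num
      have h3 : (n:ℝ) * (n:ℝ) ^ (-(7:ℝ)/8) = (n:ℝ) ^ ((1:ℝ)/8) := by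
        nth_rewrite 1 [← Real.rpow_one (n:ℝ)]
        rw [← Real.rpow_add hnpos]
        norm_num
      calc c * 2 ^ (-(3:ℝ)/2) * 2 ^ (-(1:ℝ)/2) * (n:ℝ) ^ ((1:ℝ)/8)
          = (c * 2 ^ (-(3:ℝ)/2)) * ((n:ℝ) * (2 ^ (-(1:ℝ)/2) * (n:ℝ) ^ (-(7:ℝ)/8))) := by
            rw [← h3]; ring
        _ = (c * 2 ^ (-(3:ℝ)/2)) * ((n:ℝ) * (2 * (n:ℝ) ^ ((7:ℝ)/4)) ^ (-(1:ℝ)/2)) := by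
            rw [h2]
        _ ≤ (c * 2 ^ (-(3:ℝ)/2)) * ((n:ℝ) * (K:ℝ) ^ (-(1:ℝ)/2)) := by
            apply mul_le_mul_of_nonneg_left _ (by positivity)
            exact mul_le_mul_of_nonneg_left h1 (le_of_lt hnpos)
        _ = (n:ℝ) * (c * 2 ^ (-(3:ℝ)/2) * (K:ℝ) ^ (-(1:ℝ)/2)) := by ring
    have hpoly : (n:ℝ) * ((n:ℝ) * ((n:ℝ) * (c^2 / (K:ℝ)^2))) ≤ c^2 * (n:ℝ) ^ (-(1:ℝ)/2) := by
      have h1 : (n:ℝ) ^ ((7:ℝ)/2) ≤ (K:ℝ)^2 := by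
        calc (n:ℝ) ^ ((7:ℝ)/2) = ((n:ℝ) ^ ((7:ℝ)/4))^2 := by
              rw [← Real.rpow_natCast ((n:ℝ) ^ ((7:ℝ)/4)) 2, ← Real.rpow_mul (le_of_lt hnpos)]
              norm_num
          _ ≤ (K:ℝ)^2 := by
              apply pow_le_pow_left₀ (by positivity) hKlb
      calc (n:ℝ) * ((n:ℝ) * ((n:ℝ) * (c^2 / (K:ℝ)^2)))
          = c^2 * ((n:ℝ)^(3:ℕ) / (K:ℝ)^2) := by ring
        _ ≤ c^2 * ((n:ℝ)^(3:ℕ) / (n:ℝ) ^ ((7:ℝ)/2)) := by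
            apply mul_le_mul_of_nonneg_left _ (by positivity)
            apply div_le_div_of_nonneg_left (by positivity) (by positivity) h1
        _ = c^2 * (n:ℝ) ^ (-(1:ℝ)/2) := by
            congr 1
            rw [← Real.rpow_natCast (n:ℝ) 3, ← Real.rpow_sub hnpos]
            norm_num
    calc (n:ℝ) * (P (A n)).toReal
        ≤ (n:ℝ) * (Real.exp (-((n:ℝ) * x)) + (n:ℝ) * ((n:ℝ) * (c^2 / (K:ℝ)^2))) :=
          mul_le_mul_of_nonneg_left htr (by positivity)
      _ = (n:ℝ) * Real.exp (-((n:ℝ) * x)) + (n:ℝ) * ((n:ℝ) * ((n:ℝ) * (c^2 / (K:ℝ)^2))) := by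
          ring
      _ ≤ (n:ℝ) * Real.exp (-(a * (n:ℝ) ^ ((1:ℝ)/8))) + c^2 * (n:ℝ) ^ (-(1:ℝ)/2) :=
          add_le_add (mul_le_mul_of_nonneg_left hexp (by positivity)) hpoly
  · exact asym18 a c ha0
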